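/- Trace-preserving criterion: let Ψ be a completely positive linear map from M_n(ℂ) to itself, G, H ∈ M_n(ℂ) Hermitian, and ℒ = L(Ψ,G,H). Then tr(exp(tℒ)(ρ)) = tr(ρ) for every t ≥ 0 and every ρ ∈ M_n(ℂ) if and only if Ψ*(I) = 2G, where I is the identity matrix. -/

import Mathlib

open scoped Kronecker ComplexOrder Matrix

/-- The Choi matrix of a linear map `Λ : M_n(ℂ) → M_m(ℂ)`:
`C(Λ) = ∑ i j, Λ(E i j) ⊗ₖ E i j`, a matrix indexed by `Fin m × Fin n`. -/
noncomputable def choi {n m : ℕ}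
    (Λ : Matrix (Fin n) (Fin n) ℂ →ₗ[ℂ] Matrix (Fin m) (Fin m) ℂ) :
    Matrix (Fin m × Fin n) (Fin m × Fin n) ℂ :=
  ∑ i : Fin n, ∑ j : Fin n,
    (Λ (Matrix.single i j 1)) ⊗ₖ (Matrix.single i j 1)

/-- `Λ ⊗ id_N` : the unique linear map with `(Λ ⊗ id_N)(A ⊗ₖ B) = Λ(A) ⊗ₖ B`,
written out explicitly. -/
noncomputable def tensorId {n m : ℕ}
    (Λ : Matrix (Fin n) (Fin n) ℂ →ₗ[ℂ] Matrix (Fin m) (Fin m) ℂ) (N : ℕ)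
    (M : Matrix (Fin n × Fin N) (Fin n × Fin N) ℂ) :
    Matrix (Fin m × Fin N) (Fin m × Fin N) ℂ :=
  Matrix.of fun p q => Λ (Matrix.of fun i j => M (i, p.2) (j, q.2)) p.1 q.1

/-- `Λ` is `N`-positive: `Λ ⊗ id_N` maps PSD matrices to PSD matrices. -/
def NPos {n m : ℕ}
    (Λ : Matrix (Fin n) (Fin n) ℂ →ₗ[ℂ] Matrix (Fin m) (Fin m) ℂ) (N : ℕ) : Prop :=
  ∀ M : Matrix (Fin n × Fin N) (Fin n × Fin N) ℂ,
    M.PosSemidef → (tensorId Λ N M).PosSemidef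

/-- `Λ` is completely positive: `N`-positive for every `N ≥ 1`. -/
def CP {n m : ℕ}
    (Λ : Matrix (Fin n) (Fin n) ℂ →ₗ[ℂ] Matrix (Fin m) (Fin m) ℂ) : Prop :=
  ∀ N : ℕ, 1 ≤ N → NPos Λ N

attribute [local instance] Matrix.normedAddCommGroup Matrix.normedSpace

/-- Porting aid: the topological-ring structure of the normed ring `M_n(ℂ) →L[ℂ] M_n(ℂ)`,
which instance search no longer finds by itself through the local matrix norm. -/
instance instIsTopologicalRingMatrixCLM {n : ℕ} :
    IsTopologicalRing (Matrix (Fin n) (Fin n) ℂ →L[ℂ] Matrix (Fin n) (Fin n) ℂ) := by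
  letI : NormedRing (Matrix (Fin n) (Fin n) ℂ →L[ℂ] Matrix (Fin n) (Fin n) ℂ) :=
    ContinuousLinearMap.toNormedRing
  exact NonUnitalSeminormedRing.toIsTopologicalRing

set_option maxHeartbeats 1000000 in

/-- trace-preserving criterion: for `ℒ = L(Ψ,G,H)` with `Ψ` completely
positive and `G`, `H` Hermitian, the semigroup `exp(tℒ)` is trace preserving for all
`t ≥ 0` iff `Ψ*(I) = 2G`. -/
theorem trace_preserving_criterion {n : ℕ}
    (Ψ : Matrix (Fin n) (Fin n) ℂ →ₗ[ℂ] Matrix (Fin n) (Fin n) ℂ) (hΨ : CP Ψ)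
    (G H : Matrix (Fin n) (Fin n) ℂ) (hG : G.IsHermitian) (hH : H.IsHermitian)
    (Ψadj : Matrix (Fin n) (Fin n) ℂ →ₗ[ℂ] Matrix (Fin n) (Fin n) ℂ)
    (hadj : ∀ B ρ : Matrix (Fin n) (Fin n) ℂ,
      (Bᴴ * Ψ ρ).trace = ((Ψadj B)ᴴ * ρ).trace)
    (ℒ : Matrix (Fin n) (Fin n) ℂ →L[ℂ] Matrix (Fin n) (Fin n) ℂ)
    (hℒ : ∀ ρ : Matrix (Fin n) (Fin n) ℂ,
      ℒ ρ = Ψ ρ - (G * ρ + ρ * G) - Complex.I • (H * ρ - ρ * H)) :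
    (∀ t : ℝ, 0 ≤ t → ∀ ρ : Matrix (Fin n) (Fin n) ℂ,
        (NormedSpace.exp ((t : ℂ) • ℒ) ρ).trace = ρ.trace) ↔
      Ψadj 1 = (2 : ℂ) • G := by
  classical
  -- key trace identity for ℒ
  have key : ∀ σ : Matrix (Fin n) (Fin n) ℂ,
      (ℒ σ).trace = (((Ψadj 1)ᴴ - (2 : ℂ) • G) * σ).trace := by
    intro σ
    have h1 : (Ψ σ).trace = ((Ψadj 1)ᴴ * σ).trace := by
      simpa using hadj 1 σ
    rw [hℒ σ, Matrix.sub_mul, Matrix.smul_mul]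
    rw [Matrix.trace_sub, Matrix.trace_sub, Matrix.trace_add, Matrix.trace_smul,
      Matrix.trace_sub, Matrix.trace_sub, Matrix.trace_smul,
      Matrix.trace_mul_comm σ G, Matrix.trace_mul_comm σ H, ← h1]
    simp only [smul_eq_mul]
    ring
  -- the derivative of t ↦ tr(exp(tℒ) ρ)
  let trC : Matrix (Fin n) (Fin n) ℂ →L[ℂ] ℂ :=
    LinearMap.toContinuousLinearMap (Matrix.traceLinearMap (Fin n) ℂ ℂ)
  have hder : ∀ (ρ : Matrix (Fin n) (Fin n) ℂ) (t : ℝ),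
      HasDerivAt (fun s : ℝ => ((NormedSpace.exp ((s : ℂ) • ℒ)) ρ).trace)
        ((ℒ ((NormedSpace.exp ((t : ℂ) • ℒ)) ρ)).trace) t := by
    intro ρ t
    letI : NormedRing (Matrix (Fin n) (Fin n) ℂ →L[ℂ] Matrix (Fin n) (Fin n) ℂ) :=
      ContinuousLinearMap.toNormedRing
    letI : NormedAlgebra ℂ (Matrix (Fin n) (Fin n) ℂ →L[ℂ] Matrix (Fin n) (Fin n) ℂ) :=
      ContinuousLinearMap.toNormedAlgebra
    letI : NormedSpace ℝ (Matrix (Fin n) (Fin n) ℂ →L[ℂ] Matrix (Fin n) (Fin n) ℂ) :=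
      ContinuousLinearMap.toNormedSpace
    letI : IsBoundedSMul ℝ (Matrix (Fin n) (Fin n) ℂ →L[ℂ] Matrix (Fin n) (Fin n) ℂ) :=
      NormedSpace.toIsBoundedSMul
    letI : ContinuousSMul ℝ (Matrix (Fin n) (Fin n) ℂ →L[ℂ] Matrix (Fin n) (Fin n) ℂ) :=
      IsBoundedSMul.continuousSMul
    letI : SequentialSpace (Matrix (Fin n) (Fin n) ℂ) :=
      show SequentialSpace (Fin n → Fin n → ℂ) from inferInstance
    have h1 : HasDerivAt (fun u : ℂ => NormedSpace.exp (u • ℒ))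
        (ℒ * NormedSpace.exp ((t : ℂ) • ℒ)) (t : ℂ) :=
      @hasDerivAt_exp_smul_const' ℂ _ _ _ _ (by exact ContinuousLinearMap.instCompleteSpace) ℒ (t : ℂ)
    have h2 : HasDerivAt (fun s : ℝ => NormedSpace.exp ((s : ℂ) • ℒ))
        (ℒ * NormedSpace.exp ((t : ℂ) • ℒ)) t := by
      have h := @HasDerivAt.scomp ℝ _ _ _ _ t ℂ _ _ _ (by exact ContinuousLinearMap.isScalarTower) _ _ _ _ h1 (Complex.ofRealCLM.hasDerivAt (x := t))
      exact h.congr_deriv (by rw [Complex.ofRealCLM_apply, Complex.ofReal_one]; exact one_smul ℂ _)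
    have h3 := (((trC.comp (ContinuousLinearMap.apply ℂ
      (Matrix (Fin n) (Fin n) ℂ) ρ)).restrictScalars ℝ).hasFDerivAt
      (x := NormedSpace.exp ((t : ℂ) • ℒ))).comp_hasDerivAt t h2
    exact h3
  constructor
  · intro h
    have h0 : ∀ σ : Matrix (Fin n) (Fin n) ℂ, (ℒ σ).trace = 0 := by
      intro σ
      have hd := hder σ 0
      rw [show (((0 : ℝ) : ℂ)) • ℒ = 0 by rw [Complex.ofReal_zero]; exact zero_smul ℂ ℒ, NormedSpace.exp_zero] at hd
      simp only [ContinuousLinearMap.one_apply] at hd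
      have hw := hd.hasDerivWithinAt (s := Set.Ici (0 : ℝ))
      have hconst : HasDerivWithinAt
          (fun s : ℝ => ((NormedSpace.exp ((s : ℂ) • ℒ)) σ).trace)
          0 (Set.Ici 0) 0 := by
        have hc : HasDerivWithinAt (fun _ : ℝ => σ.trace) 0 (Set.Ici 0) (0 : ℝ) :=
          (hasDerivAt_const _ _).hasDerivWithinAt
        exact hc.congr (fun x hx => h x hx σ) (h 0 le_rfl σ)
      exact (uniqueDiffOn_Ici 0 0 Set.self_mem_Ici).eq_deriv _ hw hconst
    have hM : (Ψadj 1)ᴴ - (2 : ℂ) • G = 0 := by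
      ext i j
      have hij := (key (Matrix.single j i 1)).symm.trans (h0 _)
      simpa [Matrix.trace, Matrix.mul_apply, Matrix.single, Matrix.diag,
        ite_and, Finset.sum_ite_eq, Finset.sum_ite_eq'] using hij
    have hM' : (Ψadj 1)ᴴ = (2 : ℂ) • G := sub_eq_zero.mp hM
    have := congrArg Matrix.conjTranspose hM'
    rw [Matrix.conjTranspose_conjTranspose, Matrix.conjTranspose_smul, hG.eq] at this
    simpa using this
  · intro hΨG t ht ρ
    have h2G : ((2 : ℂ) • G)ᴴ = (2 : ℂ) • G := by
      rw [Matrix.conjTranspose_smul, hG.eq]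
      norm_num
    have h0 : ∀ σ : Matrix (Fin n) (Fin n) ℂ, (ℒ σ).trace = 0 := by
      intro σ
      rw [key, hΨG, h2G]
      simp
    have hdiff : ∀ s : ℝ,
        HasDerivAt (fun s : ℝ => ((NormedSpace.exp ((s : ℂ) • ℒ)) ρ).trace) 0 s := by
      intro s
      have hd := hder ρ s
      rwa [h0] at hd
    have hconst := is_const_of_deriv_eq_zero
      (fun s => (hdiff s).differentiableAt) (fun s => (hdiff s).deriv) t 0
    rw [show (((0 : ℝ) : ℂ)) • ℒ = 0 from by rw [Complex.ofReal_zero]; exact zero_smul ℂ ℒ,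
      NormedSpace.exp_zero] at hconst
    simpa using hconst
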